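/- Let A, B be real symmetric positive semidefinite N×N matrices. The squared 2-Wasserstein distance between the centered Gaussians N(0, A²) and N(0, B²), given by Tr(A²) + Tr(B²) − 2 Tr(√(A B² A)), is nonnegative. -/

import Mathlib

open Matrix

open scoped ComplexOrder in
/-- The square root of a positive semidefinite matrix, as `Matrix.PosSemidef.sqrt` was defined
in Mathlib (December 2024); removed from current Mathlib. -/
noncomputable def Matrix.PosSemidef.sqrt {n : Type*} [Fintype n] [DecidableEq n] {𝕜 : Type*}
    [RCLike 𝕜] {A : Matrix n n 𝕜} (hA : A.PosSemidef) : Matrix n n 𝕜 :=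
  hA.1.eigenvectorUnitary.1 * diagonal ((↑) ∘ (Real.sqrt ∘ hA.1.eigenvalues)) *
    (star hA.1.eigenvectorUnitary : Matrix n n 𝕜)

open scoped ComplexOrder in
lemma Matrix.PosSemidef.posSemidef_sqrt {n : Type*} [Fintype n] [DecidableEq n] {𝕜 : Type*}
    [RCLike 𝕜] {A : Matrix n n 𝕜} (hA : A.PosSemidef) : hA.sqrt.PosSemidef := by
  have hD : (diagonal ((↑) ∘ (Real.sqrt ∘ hA.1.eigenvalues)) : Matrix n n 𝕜).PosSemidef :=
    PosSemidef.diagonal (fun i => by simp [Real.sqrt_nonneg])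
  have := hD.mul_mul_conjTranspose_same (hA.1.eigenvectorUnitary : Matrix n n 𝕜)
  rwa [← Matrix.star_eq_conjTranspose] at this

open scoped ComplexOrder in
lemma Matrix.PosSemidef.sqrt_mul_self {n : Type*} [Fintype n] [DecidableEq n] {𝕜 : Type*}
    [RCLike 𝕜] {A : Matrix n n 𝕜} (hA : A.PosSemidef) : hA.sqrt * hA.sqrt = A := by
  have hU := Unitary.coe_star_mul_self hA.1.eigenvectorUnitary
  have hDD : (diagonal ((↑) ∘ (Real.sqrt ∘ hA.1.eigenvalues)) : Matrix n n 𝕜) *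
      diagonal ((↑) ∘ (Real.sqrt ∘ hA.1.eigenvalues)) = diagonal (RCLike.ofReal ∘ hA.1.eigenvalues) := by
    rw [diagonal_mul_diagonal]
    congr 1
    funext i
    simp only [Function.comp_apply, ← RCLike.ofReal_mul, Real.mul_self_sqrt (hA.eigenvalues_nonneg i)]
  conv_rhs => rw [hA.1.spectral_theorem, Unitary.conjStarAlgAut_apply]
  unfold Matrix.PosSemidef.sqrt
  calc _ = (hA.1.eigenvectorUnitary : Matrix n n 𝕜) * diagonal ((↑) ∘ (Real.sqrt ∘ hA.1.eigenvalues)) *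
        ((star hA.1.eigenvectorUnitary : Matrix n n 𝕜) * (hA.1.eigenvectorUnitary : Matrix n n 𝕜)) *
        diagonal ((↑) ∘ (Real.sqrt ∘ hA.1.eigenvalues)) * (star hA.1.eigenvectorUnitary : Matrix n n 𝕜) := by
          simp only [Matrix.mul_assoc]
    _ = _ := by
          rw [hU, Matrix.mul_one, Matrix.mul_assoc _ (diagonal _) (diagonal _), hDD]

lemma psd_trace_nonneg {n : Type*} [Fintype n] [DecidableEq n] {P : Matrix n n ℝ}
    (hP : P.PosSemidef) : 0 ≤ P.trace := by
  rw [Matrix.trace]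
  refine Finset.sum_nonneg fun i _ => ?_
  have := hP.2 (Finsupp.single i 1)
  simpa [Finsupp.sum_single_index,
    Matrix.diag] using this

lemma psd_trace_mul_nonneg {n : Type*} [Fintype n] [DecidableEq n] {P Q : Matrix n n ℝ}
    (hP : P.PosSemidef) (hQ : Q.PosSemidef) : 0 ≤ (P * Q).trace := by
  obtain ⟨C, hCdef⟩ : ∃ C, C = hP.sqrt := ⟨_, rfl⟩
  have hC : C * C = P := by rw [hCdef]; exact hP.sqrt_mul_self
  have hCH : Cᴴ = C := hCdef ▸ hP.posSemidef_sqrt.1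
  have h1 : (P * Q).trace = (C * Q * C).trace := by
    rw [← hC, Matrix.mul_assoc, Matrix.trace_mul_comm]
  rw [h1]
  have := hQ.mul_mul_conjTranspose_same C
  rw [hCH] at this
  exact psd_trace_nonneg this

/-- For symmetric positive semidefinite `A`, `B`, the squared 2-Wasserstein distance between
the centered Gaussians `N(0, A²)` and `N(0, B²)`, namely
`Tr(A²) + Tr(B²) − 2 Tr(√(A B² A))`, is nonnegative. -/
theorem stmt_8 {N : ℕ} (A B : Matrix (Fin N) (Fin N) ℝ)
    (hA : A.PosSemidef) (hB : B.PosSemidef)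
    (hM : (A * (B * B) * A).PosSemidef) :
    0 ≤ (A * A).trace + (B * B).trace - 2 * hM.sqrt.trace := by
  obtain ⟨S, hSdef⟩ : ∃ S, S = hM.sqrt := ⟨_, rfl⟩
  rw [← hSdef]
  have hS : S.PosSemidef := hSdef ▸ hM.posSemidef_sqrt
  have hSS : S * S = A * (B * B) * A := by rw [hSdef]; exact hM.sqrt_mul_self
  have hAA : (A * A).PosSemidef := by
    have := hA.pow 2
    rwa [pow_two] at this
  have hBB : (B * B).PosSemidef := by
    have := hB.pow 2
    rwa [pow_two] at this
  have key : ∀ ε : ℝ, 0 < ε →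
      2 * S.trace ≤ (A * A).trace + (B * B).trace + ε * N := by
    intro ε hε
    obtain ⟨X, hX⟩ : ∃ X, X = A * A + ε • (1 : Matrix (Fin N) (Fin N) ℝ) := ⟨_, rfl⟩
    have hone : (ε • (1 : Matrix (Fin N) (Fin N) ℝ)).PosDef := by
      have : ε • (1 : Matrix (Fin N) (Fin N) ℝ) = Matrix.diagonal (fun _ => ε) := by
        ext i j
        by_cases h : i = j <;> simp [Matrix.diagonal, Matrix.one_apply, h]
      rw [this]
      exact Matrix.PosDef.diagonal (fun _ => hε)
    have hXpd : X.PosDef := hX ▸ Matrix.PosDef.posSemidef_add hAA hone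
    have hXu : IsUnit X.det := isUnit_iff_isUnit_det _ |>.1 hXpd.isUnit
    obtain ⟨R, hRdef⟩ : ∃ R, R = hXpd.posSemidef.sqrt := ⟨_, rfl⟩
    have hR : R.PosSemidef := hRdef ▸ hXpd.posSemidef.posSemidef_sqrt
    have hRR : R * R = X := by rw [hRdef]; exact hXpd.posSemidef.sqrt_mul_self
    have hRu : IsUnit R.det := by
      have hdet : R.det * R.det = X.det := by rw [← Matrix.det_mul, hRR]
      refine isUnit_iff_ne_zero.2 fun h0 => isUnit_iff_ne_zero.1 hXu ?_
      rw [← hdet, h0, mul_zero]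
    have h1 : R * R⁻¹ = 1 := Matrix.mul_nonsing_inv _ hRu
    have h2 : R⁻¹ * R = 1 := Matrix.nonsing_inv_mul _ hRu
    have hX1 : X * X⁻¹ = 1 := Matrix.mul_nonsing_inv _ hXu
    have hX2 : X⁻¹ * X = 1 := Matrix.nonsing_inv_mul _ hXu
    have hXinvRR : X⁻¹ = R⁻¹ * R⁻¹ := by rw [← hRR, Matrix.mul_inv_rev]
    -- key trace identity:
    have hSH : Sᴴ = S := hS.1
    have hRH : Rᴴ = R := hR.1
    have hRiH : (R⁻¹)ᴴ = R⁻¹ := by rw [Matrix.conjTranspose_nonsing_inv, hRH]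
    have h0 : 0 ≤ ((R⁻¹ * S - R) * (R⁻¹ * S - R)ᴴ).trace :=
      psd_trace_nonneg (Matrix.posSemidef_self_mul_conjTranspose _)
    have hexp : ((R⁻¹ * S - R) * (R⁻¹ * S - R)ᴴ).trace
        = (X⁻¹ * (S * S)).trace + X.trace - 2 * S.trace := by
      rw [Matrix.conjTranspose_sub, Matrix.conjTranspose_mul, hSH, hRiH, hRH]
      have e1 : (R⁻¹ * S - R) * (S * R⁻¹ - R)
          = R⁻¹ * S * (S * R⁻¹) - R⁻¹ * S * R - R * (S * R⁻¹) + R * R := by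
        noncomm_ring
      rw [e1, Matrix.trace_add, Matrix.trace_sub, Matrix.trace_sub]
      have t1 : (R⁻¹ * S * (S * R⁻¹)).trace = (X⁻¹ * (S * S)).trace := by
        have e : R⁻¹ * S * (S * R⁻¹) = (R⁻¹ * S * S) * R⁻¹ := by noncomm_ring
        rw [e, Matrix.trace_mul_comm, hXinvRR]
        congr 1
        noncomm_ring
      have t2 : (R⁻¹ * S * R).trace = S.trace := by
        rw [Matrix.trace_mul_cycle, h1, Matrix.one_mul]
      have t3 : (R * (S * R⁻¹)).trace = S.trace := by
        rw [← Matrix.mul_assoc, Matrix.trace_mul_cycle, h2, Matrix.one_mul]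
      rw [t1, t2, t3, hRR]
      ring
    -- bound Tr(X⁻¹ * S * S)
    have hcommX : A * X = X * A := by
      rw [hX]
      simp only [Matrix.mul_add, Matrix.add_mul, Matrix.mul_smul, Matrix.smul_mul,
        Matrix.mul_one, Matrix.one_mul, Matrix.mul_assoc]
    have hcomm : A * X⁻¹ = X⁻¹ * A := by
      calc A * X⁻¹ = (X⁻¹ * X) * A * X⁻¹ := by rw [hX2, Matrix.one_mul]
        _ = X⁻¹ * (X * A) * X⁻¹ := by rw [Matrix.mul_assoc X⁻¹ X A]
        _ = X⁻¹ * (A * X) * X⁻¹ := by rw [hcommX]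
        _ = X⁻¹ * A * (X * X⁻¹) := by
            rw [← Matrix.mul_assoc X⁻¹ A X, Matrix.mul_assoc (X⁻¹ * A) X X⁻¹]
        _ = X⁻¹ * A := by rw [hX1, Matrix.mul_one]
    have hA2X : X⁻¹ * (A * A) = 1 - ε • X⁻¹ := by
      have e : A * A = X - ε • (1 : Matrix (Fin N) (Fin N) ℝ) := by rw [hX]; abel
      rw [e, Matrix.mul_sub, hX2, Matrix.mul_smul, Matrix.mul_one]
    have hbound : (X⁻¹ * (S * S)).trace ≤ (B * B).trace := by
      rw [hSS]
      have e2 : (X⁻¹ * (A * (B * B) * A)).trace = (X⁻¹ * (A * A) * (B * B)).trace := by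
        rw [Matrix.trace_mul_comm]
        rw [show A * (B * B) * A * X⁻¹ = A * (B * B) * (A * X⁻¹) from by noncomm_ring, hcomm]
        rw [show A * (B * B) * (X⁻¹ * A) = (A * (B * B)) * (X⁻¹ * A) from by noncomm_ring]
        rw [Matrix.trace_mul_comm]
        congr 1
        noncomm_ring
      rw [e2, hA2X, Matrix.sub_mul, Matrix.one_mul, Matrix.trace_sub,
        Matrix.smul_mul, Matrix.trace_smul]
      have hnn : 0 ≤ (X⁻¹ * (B * B)).trace :=
        psd_trace_mul_nonneg hXpd.inv.posSemidef hBB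
      have h' : 0 ≤ ε * (X⁻¹ * (B * B)).trace := mul_nonneg hε.le hnn
      simp only [smul_eq_mul]
      linarith
    have hTrX : X.trace = (A * A).trace + ε * N := by
      rw [hX, Matrix.trace_add, Matrix.trace_smul, Matrix.trace_one]
      simp [smul_eq_mul]
    have hfin := h0
    rw [hexp, hTrX] at hfin
    linarith
  -- let ε → 0
  have hfin : 2 * S.trace ≤ (A * A).trace + (B * B).trace := by
    refine le_of_forall_pos_le_add fun ε hε => ?_
    have hk := key (ε / (N + 1)) (by positivity)
    have hle : (ε / (N + 1)) * N ≤ ε := by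
      rw [div_mul_eq_mul_div, div_le_iff₀ (by positivity)]
      nlinarith [hε.le]
    linarith
  linarith
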